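/- Let a_1 > a_2 > ⋯ > a_n be real numbers and w_1, …, w_n be strictly positive reals. Then the rational function R(λ) = Σ_{i=1}^n w_i/(a_i - λ) has exactly n-1 real zeros λ_1 > λ_2 > ⋯ > λ_{n-1}, and these interlace strictly with the a_i: a_1 > λ_1 > a_2 > λ_2 > ⋯ > λ_{n-1} > a_n. -/

import Mathlib

open Filter Set Finset Topology

private lemma term_lt {wv c x y : ℝ} (hw : 0 < wv) (hxy : x < y) (h : y < c ∨ c < x) :
    wv / (c - x) < wv / (c - y) := by
  rcases h with h | h
  · exact div_lt_div_of_pos_left hw (by linarith) (by linarith)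
  · have h1 : wv / (y - c) < wv / (x - c) :=
      div_lt_div_of_pos_left hw (by linarith) (by linarith)
    have e1 : wv / (c - x) = -(wv / (x - c)) := by
      rw [show c - x = -(x - c) by ring, div_neg]
    have e2 : wv / (c - y) = -(wv / (y - c)) := by
      rw [show c - y = -(y - c) by ring, div_neg]
    rw [e1, e2]; linarith

private lemma aux_mono {n : ℕ} (a w : Fin (n + 1) → ℝ) (ha : StrictAnti a)
    (hw : ∀ i, 0 < w i) (i : Fin n) :
    StrictMonoOn (fun x => ∑ j, w j / (a j - x)) (Set.Ioo (a i.succ) (a i.castSucc)) := by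
  intro x hx y hy hxy
  refine Finset.sum_lt_sum_of_nonempty Finset.univ_nonempty fun j _ => ?_
  refine term_lt (hw j) hxy ?_
  rcases le_or_gt j i.castSucc with h | h
  · exact Or.inl (lt_of_lt_of_le hy.2 (ha.antitone h))
  · have hle : i.succ ≤ j := by
      rw [Fin.lt_def] at h
      rw [Fin.le_def]
      simp only [Fin.val_succ, Fin.coe_castSucc] at *
      omega
    exact Or.inr (lt_of_le_of_lt (ha.antitone hle) hx.1)

private lemma tendsto_term_atTop {wv c : ℝ} (hw : 0 < wv) :
    Tendsto (fun x => wv / (c - x)) (𝓝[<] c) atTop := by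
  have h0 : Tendsto (fun x : ℝ => c - x) (𝓝[<] c) (𝓝 (c - c)) :=
    tendsto_const_nhds.sub (tendsto_id.mono_left nhdsWithin_le_nhds)
  rw [sub_self] at h0
  have h1 : Tendsto (fun x : ℝ => c - x) (𝓝[<] c) (𝓝[>] (0 : ℝ)) := by
    apply tendsto_nhdsWithin_of_tendsto_nhds_of_eventually_within _ h0
    filter_upwards [self_mem_nhdsWithin] with x hx
    exact sub_pos.2 (Set.mem_Iio.mp hx)
  have h2 := (tendsto_inv_nhdsGT_zero.comp h1).const_mul_atTop hw
  simpa [div_eq_mul_inv, Function.comp] using h2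

private lemma tendsto_term_atBot {wv c : ℝ} (hw : 0 < wv) :
    Tendsto (fun x => wv / (c - x)) (𝓝[>] c) atBot := by
  have h0 : Tendsto (fun x : ℝ => x - c) (𝓝[>] c) (𝓝 (c - c)) :=
    (tendsto_id.mono_left nhdsWithin_le_nhds).sub tendsto_const_nhds
  rw [sub_self] at h0
  have h1 : Tendsto (fun x : ℝ => x - c) (𝓝[>] c) (𝓝[>] (0 : ℝ)) := by
    apply tendsto_nhdsWithin_of_tendsto_nhds_of_eventually_within _ h0
    filter_upwards [self_mem_nhdsWithin] with x hx
    exact sub_pos.2 (Set.mem_Ioi.mp hx)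
  have h2 := (tendsto_inv_nhdsGT_zero.comp h1).const_mul_atTop hw
  have h3 := tendsto_neg_atTop_atBot.comp h2
  refine h3.congr fun x => ?_
  simp only [Function.comp]
  rw [show c - x = -(x - c) by ring, div_neg, div_eq_mul_inv]

private lemma aux_dich {n : ℕ} (a : Fin (n + 1) → ℝ) (ha : StrictAnti a) (i : Fin n)
    (j : Fin (n + 1)) : a i.castSucc ≤ a j ∨ a j ≤ a i.succ := by
  rcases le_or_gt j i.castSucc with h | h
  · exact Or.inl (ha.antitone h)
  · refine Or.inr (ha.antitone ?_)
    rw [Fin.lt_def] at h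
    rw [Fin.le_def]
    simp only [Fin.val_succ, Fin.coe_castSucc] at *
    omega

private lemma aux_exists {n : ℕ} (a w : Fin (n + 1) → ℝ) (ha : StrictAnti a)
    (hw : ∀ i, 0 < w i) (i : Fin n) :
    ∃ x ∈ Set.Ioo (a i.succ) (a i.castSucc), ∑ j, w j / (a j - x) = 0 := by
  set f : ℝ → ℝ := fun x => ∑ j, w j / (a j - x) with hf
  have hqp : a i.succ < a i.castSucc := ha (Fin.castSucc_lt_succ (i := i))
  -- tendsto atTop at left endpoint of the pole a i.castSucc
  have hdT : ∀ x : ℝ, f x = w i.castSucc / (a i.castSucc - x)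
      + ∑ j ∈ Finset.univ.erase i.castSucc, w j / (a j - x) :=
    fun x => (Finset.add_sum_erase _ _ (Finset.mem_univ i.castSucc)).symm
  have hT : Tendsto f (𝓝[<] (a i.castSucc)) atTop := by
    rw [show f = fun x => w i.castSucc / (a i.castSucc - x)
      + ∑ j ∈ Finset.univ.erase i.castSucc, w j / (a j - x) from funext hdT]
    refine (tendsto_term_atTop (hw i.castSucc)).atTop_add
      (tendsto_finset_sum (a := fun j => w j / (a j - a i.castSucc)) _ fun j hj => ?_)
    have hne : a j - a i.castSucc ≠ 0 :=
      sub_ne_zero.2 fun h => (Finset.ne_of_mem_erase hj) (ha.injective h)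
    have hc : ContinuousAt (fun x => w j / (a j - x)) (a i.castSucc) :=
      continuousAt_const.div (continuousAt_const.sub continuousAt_id) hne
    exact hc.tendsto.mono_left nhdsWithin_le_nhds
  have hdB : ∀ x : ℝ, f x = w i.succ / (a i.succ - x)
      + ∑ j ∈ Finset.univ.erase i.succ, w j / (a j - x) :=
    fun x => (Finset.add_sum_erase _ _ (Finset.mem_univ i.succ)).symm
  have hB : Tendsto f (𝓝[>] (a i.succ)) atBot := by
    rw [show f = fun x => w i.succ / (a i.succ - x)
      + ∑ j ∈ Finset.univ.erase i.succ, w j / (a j - x) from funext hdB]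
    refine (tendsto_term_atBot (hw i.succ)).atBot_add
      (tendsto_finset_sum (a := fun j => w j / (a j - a i.succ)) _ fun j hj => ?_)
    have hne : a j - a i.succ ≠ 0 :=
      sub_ne_zero.2 fun h => (Finset.ne_of_mem_erase hj) (ha.injective h)
    have hc : ContinuousAt (fun x => w j / (a j - x)) (a i.succ) :=
      continuousAt_const.div (continuousAt_const.sub continuousAt_id) hne
    exact hc.tendsto.mono_left nhdsWithin_le_nhds
  -- pick points with positive / negative values
  obtain ⟨x₁, hx₁pos, hx₁mem⟩ : ∃ x, 0 < f x ∧ x ∈ Set.Ioo (a i.succ) (a i.castSucc) := by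
    have h1 := hT.eventually_gt_atTop 0
    have h2 : ∀ᶠ x in 𝓝[<] (a i.castSucc), x ∈ Set.Ioo (a i.succ) (a i.castSucc) :=
      eventually_of_mem (Ioo_mem_nhdsLT_of_mem ⟨hqp, le_refl _⟩) fun x hx => hx
    exact (h1.and h2).exists
  obtain ⟨x₀, hx₀neg, hx₀mem⟩ : ∃ x, f x < 0 ∧ x ∈ Set.Ioo (a i.succ) (a i.castSucc) := by
    have h1 := hB.eventually_lt_atBot 0
    have h2 : ∀ᶠ x in 𝓝[>] (a i.succ), x ∈ Set.Ioo (a i.succ) (a i.castSucc) :=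
      eventually_of_mem (Ioo_mem_nhdsGT_of_mem ⟨le_refl _, hqp⟩) fun x hx => hx
    exact (h1.and h2).exists
  have hmono := aux_mono a w ha hw i
  have hx01 : x₀ < x₁ := by
    rcases lt_trichotomy x₀ x₁ with h | h | h
    · exact h
    · exact absurd (h ▸ hx₀neg) (by linarith)
    · exact absurd (hmono hx₁mem hx₀mem h) (by linarith)
  have hsub : Set.Icc x₀ x₁ ⊆ Set.Ioo (a i.succ) (a i.castSucc) := fun x hx =>
    ⟨lt_of_lt_of_le hx₀mem.1 hx.1, lt_of_le_of_lt hx.2 hx₁mem.2⟩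
  have hcont : ContinuousOn f (Set.Icc x₀ x₁) := by
    apply continuousOn_finset_sum
    intro j _
    refine ContinuousOn.div continuousOn_const (continuousOn_const.sub continuousOn_id) ?_
    intro x hx
    have hx' := hsub hx
    rcases aux_dich a ha i j with h | h
    · exact sub_ne_zero.2 (ne_of_gt (lt_of_lt_of_le hx'.2 h))
    · exact sub_ne_zero.2 (ne_of_lt (lt_of_le_of_lt h hx'.1))
  have h0 : (0 : ℝ) ∈ Set.Icc (f x₀) (f x₁) := ⟨le_of_lt hx₀neg, le_of_lt hx₁pos⟩
  obtain ⟨x, hxmem, hfx⟩ := intermediate_value_Icc (le_of_lt hx01) hcont h0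
  exact ⟨x, hsub hxmem, hfx⟩

/-- For `a_1 > a_2 > ⋯ > a_n` real and `w_i > 0`, the rational function
`R(λ) = Σ_i w_i / (a_i - λ)` has exactly `n - 1` real zeros, and they strictly
interlace with the `a_i`:  `a_1 > λ_1 > a_2 > λ_2 > ⋯ > λ_{n-1} > a_n`. -/
theorem stmt2 {n : ℕ} (a : Fin (n + 1) → ℝ) (w : Fin (n + 1) → ℝ)
    (ha : StrictAnti a) (hw : ∀ i, 0 < w i) :
    ∃ l : Fin n → ℝ, StrictAnti l ∧
      (∀ i : Fin n, l i < a i.castSucc ∧ a i.succ < l i) ∧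
      (∀ i : Fin n, ∑ j, w j / (a j - l i) = 0) ∧
      (∀ x : ℝ, (∀ j, x ≠ a j) → ∑ j, w j / (a j - x) = 0 → ∃ i, x = l i) := by
  choose l hlmem hlzero using fun i => aux_exists a w ha hw i
  refine ⟨l, ?_, fun i => ⟨(hlmem i).2, (hlmem i).1⟩, hlzero, ?_⟩
  · intro i i' hii'
    have h1 : a i'.castSucc ≤ a i.succ := by
      refine ha.antitone ?_
      rw [Fin.lt_def] at hii'
      rw [Fin.le_def]
      simp only [Fin.val_succ, Fin.coe_castSucc]
      omega
    exact lt_trans (lt_of_lt_of_le (hlmem i').2 h1) (hlmem i).1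
  · intro x hx hsum
    -- x < a 0
    have hx0 : x < a 0 := by
      rcases lt_or_gt_of_ne (hx 0) with h | h
      · exact h
      · exfalso
        have : (∑ j, w j / (a j - x)) < 0 := by
          refine Finset.sum_neg (fun j _ => ?_) Finset.univ_nonempty
          exact div_neg_of_pos_of_neg (hw j)
            (sub_neg.2 (lt_of_le_of_lt (ha.antitone (Fin.zero_le j)) h))
        linarith
    -- a (last) < x
    have hxn : a (Fin.last n) < x := by
      rcases lt_or_gt_of_ne (hx (Fin.last n)) with h | h
      · exfalso
        have : (0:ℝ) < ∑ j, w j / (a j - x) := by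
          refine Finset.sum_pos (fun j _ => ?_) Finset.univ_nonempty
          exact div_pos (hw j)
            (sub_pos.2 (lt_of_lt_of_le h (ha.antitone (Fin.le_last j))))
        linarith
      · exact h
    -- largest index with x < a m
    set S : Finset (Fin (n + 1)) := Finset.univ.filter (fun j => x < a j) with hS
    have hS0 : (0 : Fin (n+1)) ∈ S := by simp [hS, hx0]
    have hSne : S.Nonempty := ⟨0, hS0⟩
    set m := S.max' hSne with hm
    have hmmem : m ∈ S := S.max'_mem hSne
    have hxm : x < a m := by simpa [hS] using hmmem
    have hmlast : m ≠ Fin.last n := by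
      intro h
      rw [h] at hxm
      exact absurd hxm (not_lt.2 (le_of_lt hxn))
    have hmlt : (m : ℕ) < n := by
      have := m.isLt
      have : (m : ℕ) ≠ n := fun h => hmlast (Fin.ext h)
      omega
    set i : Fin n := ⟨m, hmlt⟩ with hi
    have hcast : i.castSucc = m := by
      rw [Fin.ext_iff]; simp [hi]
    have hsuccx : a i.succ < x := by
      rcases lt_or_gt_of_ne (hx i.succ) with h | h
      · exfalso
        have hmem : i.succ ∈ S := by simp [hS, h]
        have := S.le_max' _ hmem
        rw [← hm] at this
        have h2 : i.castSucc < i.succ := Fin.castSucc_lt_succ (i := i)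
        rw [hcast] at h2
        exact absurd this (not_le.2 h2)
      · exact h
    have hxmem : x ∈ Set.Ioo (a i.succ) (a i.castSucc) := ⟨hsuccx, hcast ▸ hxm⟩
    refine ⟨i, ?_⟩
    have hmono := aux_mono a w ha hw i
    exact hmono.injOn hxmem (⟨(hlmem i).1, (hlmem i).2⟩ : _ ∈ Set.Ioo _ _)
      (by rw [hsum, hlzero i])
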